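/- Let ρ = p^ℕ be a Bernoulli product measure on D^ℕ with probability weight vector p = (p_1,…,p_m), and let s = ∑_{i=1}^m p_i². Let J1, J2 be closed intervals with J1 × J2 ⊂ Γ(s, 1), and assume J1 is a set of transversality for a subset 𝓑̃′ = ⋃_{k≥0} x^k 𝓑′ of 𝓑̃ (with 𝓑′ ⊂ 𝓑). Then there is a constant C = C(J1,J2) such that for every λ ∈ J2 for which ν_λ is absolutely continuous with density f_λ ∈ L²(ℝ): limsup_{r→0} r^{−2} ∫_{𝓑̃′} Leb{γ ∈ J1 : |Π_{γ,λ}(ω)| ≤ r} dη(ω) ≤ C · ‖f_λ‖_{L²}². -/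

import Mathlib

open MeasureTheory Filter Set
open scoped ENNReal Topology

noncomputable section

/-- `Γ(a,b) = {(γ,λ) : 0 < γ < λ < 1, 1/m < λ, a < γλ < b}`. -/
def Gamma (m : ℕ) (a b : ℝ) : Set (ℝ × ℝ) :=
  {p | 0 < p.1 ∧ p.1 < p.2 ∧ p.2 < 1 ∧ 1 / (m : ℝ) < p.2 ∧ a < p.1 * p.2 ∧ p.1 * p.2 < b}

/-- Evaluation of the power series with coefficient sequence `c` at `x`. -/
def Beval (c : ℕ → ℝ) (x : ℝ) : ℝ := ∑' n, c n * x ^ n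

/-- Membership in `𝓑̃`: all coefficients lie in `D − D`. -/
def memBtilde (m : ℕ) (d : Fin m → ℝ) (c : ℕ → ℝ) : Prop :=
  ∀ n, ∃ i j, c n = d i - d j

/-- Membership in `𝓑`: all coefficients lie in `D − D` and the constant term is nonzero. -/
def memB (m : ℕ) (d : Fin m → ℝ) (c : ℕ → ℝ) : Prop :=
  memBtilde m d c ∧ c 0 ≠ 0

/-- `ρ` is the Bernoulli product measure with weights `p`. -/
def IsBernoulliWith {α : Type*} [MeasurableSpace α] (p : α → ℝ≥0∞)
    (ρ : Measure (ℕ → α)) : Prop :=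
  IsProbabilityMeasure ρ ∧
    ∀ (n : ℕ) (w : Fin n → α), ρ {ω | ∀ i : Fin n, ω i.1 = w i} = ∏ i, p (w i)

/-- `Π_λ(ω) = ∑ₙ d(ωₙ) λⁿ`. -/
def PiOne (m : ℕ) (d : Fin m → ℝ) (l : ℝ) (ω : ℕ → Fin m) : ℝ := ∑' n, d (ω n) * l ^ n

/-- `η`: the pushforward of `ρ × ρ` under the coordinatewise difference map. -/
def etaMeasure (m : ℕ) (d : Fin m → ℝ) (ρ : Measure (ℕ → Fin m)) : Measure (ℕ → ℝ) :=
  (ρ.prod ρ).map (fun q n => d (q.1 n) - d (q.2 n))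

/-- `J` is a set of transversality for `B ⊆ 𝓑`. -/
def IsTransvOn (J : Set ℝ) (B : Set (ℕ → ℝ)) : Prop :=
  ∃ M : ℝ, 0 < M ∧ ∀ c ∈ B, ∀ r : ℝ, 0 < r →
    volume {α ∈ J | |Beval c α| < r} < ENNReal.ofReal (M * r)

/-- Multiplication of a coefficient sequence by `x^k`. -/
def shiftSeq (k : ℕ) (c : ℕ → ℝ) : ℕ → ℝ := fun n => if n < k then 0 else c (n - k)

namespace TransvAux

/-! ### Summability and series manipulation -/

lemma summable_aux {c : ℕ → ℝ} {x : ℝ} (D : ℝ) (hD : ∀ n, |c n| ≤ D) (hx : |x| < 1) :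
    Summable fun n => c n * x ^ n := by
  have h : Summable fun n : ℕ => D * |x| ^ n :=
    (summable_geometric_of_lt_one (abs_nonneg x) hx).mul_left D
  refine Summable.of_abs (h.of_nonneg_of_le (fun n => abs_nonneg _) fun n => ?_)
  rw [abs_mul, abs_pow]
  exact mul_le_mul_of_nonneg_right (hD n) (pow_nonneg (abs_nonneg x) n)

lemma tsum_split {c : ℕ → ℝ} {x : ℝ} (D : ℝ) (hD : ∀ n, |c n| ≤ D) (hx : |x| < 1) (k : ℕ) :
    ∑' n, c n * x ^ n
      = (∑ n ∈ Finset.range k, c n * x ^ n) + x ^ k * ∑' n, c (n + k) * x ^ n := by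
  have hs := summable_aux D hD hx
  rw [← Summable.sum_add_tsum_nat_add k hs]
  congr 1
  rw [← tsum_mul_left]
  congr 1
  ext n
  rw [pow_add]
  ring

lemma beval_shiftSeq {c : ℕ → ℝ} {x : ℝ} (D : ℝ) (hD : ∀ n, |c n| ≤ D) (hD0 : 0 ≤ D)
    (hx : |x| < 1) (k : ℕ) : Beval (shiftSeq k c) x = x ^ k * Beval c x := by
  have hD' : ∀ n, |shiftSeq k c n| ≤ D := by
    intro n
    by_cases h : n < k <;> simp [shiftSeq, h, hD0, hD]
  rw [Beval, tsum_split D hD' hx k]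
  have h1 : (∑ n ∈ Finset.range k, shiftSeq k c n * x ^ n) = 0 :=
    Finset.sum_eq_zero fun n hn => by
      simp [shiftSeq, Finset.mem_range.1 hn]
  have h2 : ∀ n : ℕ, shiftSeq k c (n + k) = c n := fun n => by
    simp [shiftSeq]
  rw [h1, zero_add]
  congr 1
  rw [Beval]
  congr 1
  ext n
  rw [h2]

lemma beval_sub {a b : ℕ → ℝ} {x : ℝ} (D : ℝ) (ha : ∀ n, |a n| ≤ D) (hb : ∀ n, |b n| ≤ D)
    (hx : |x| < 1) :
    Beval (fun n => a n - b n) x = Beval a x - Beval b x := by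
  rw [Beval, Beval, Beval, ← Summable.tsum_sub (summable_aux D ha hx) (summable_aux D hb hx)]
  congr 1
  ext n
  ring

/-! ### Measurability of series -/

lemma meas_tsum {α : Type*} [MeasurableSpace α] {u : ℕ → α → ℝ}
    (hu : ∀ n, Measurable (u n)) (D : ℝ) (hb : ∀ n ω, |u n ω| ≤ D) {l : ℝ} (hl : |l| < 1) :
    Measurable fun ω => ∑' n, u n ω * l ^ n := by
  apply measurable_of_tendsto_metrizable'
    (f := fun N ω => ∑ n ∈ Finset.range N, u n ω * l ^ n) atTop
  · exact fun N => Finset.measurable_sum _ fun n _ => ((hu n).mul measurable_const)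
  · rw [tendsto_pi_nhds]
    intro ω
    exact ((summable_aux D (fun n => hb n ω) hl).hasSum).tendsto_sum_nat

/-! ### Cylinders and the Bernoulli shift -/

/-- Initial-segment cylinder. -/
def cyl (m n : ℕ) (w : Fin n → Fin m) : Set (ℕ → Fin m) := {ω | ∀ i : Fin n, ω i.1 = w i}

/-- Shift by `k`. -/
def shiftk {α : Type*} (k : ℕ) (ω : ℕ → α) : ℕ → α := fun n => ω (n + k)

lemma measurable_shiftk {α : Type*} [MeasurableSpace α] (k : ℕ) :
    Measurable (shiftk (α := α) k) :=
  measurable_pi_lambda _ fun n => measurable_pi_apply (n + k)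

lemma measurableSet_cyl {m n : ℕ} (w : Fin n → Fin m) : MeasurableSet (cyl m n w) := by
  have : cyl m n w = ⋂ i : Fin n, (fun ω : ℕ → Fin m => ω i.1) ⁻¹' {w i} := by
    ext ω; simp [cyl]
  rw [this]
  exact MeasurableSet.iInter fun i => (measurable_pi_apply _) (measurableSet_singleton _)

def cylSets (m : ℕ) : Set (Set (ℕ → Fin m)) := {S | ∃ n : ℕ, ∃ w : Fin n → Fin m, S = cyl m n w}

lemma isPiSystem_cylSets (m : ℕ) : IsPiSystem (cylSets m) := by
  rintro S ⟨n, w, rfl⟩ T ⟨n', w', rfl⟩ hne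
  rcases le_total n n' with h | h
  · refine ⟨n', w', ?_⟩
    obtain ⟨ω₀, h1, h2⟩ := hne
    have hsub : cyl m n' w' ⊆ cyl m n w := by
      intro ω hω i
      have e1 : ω₀ i.1 = w i := h1 i
      have e2 : ω₀ i.1 = w' ⟨i.1, lt_of_lt_of_le i.2 h⟩ := h2 ⟨i.1, lt_of_lt_of_le i.2 h⟩
      have e3 : ω i.1 = w' ⟨i.1, lt_of_lt_of_le i.2 h⟩ := hω ⟨i.1, lt_of_lt_of_le i.2 h⟩
      rw [e3, ← e2, e1]
    exact inter_eq_self_of_subset_right hsub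
  · refine ⟨n, w, ?_⟩
    obtain ⟨ω₀, h1, h2⟩ := hne
    have hsub : cyl m n w ⊆ cyl m n' w' := by
      intro ω hω i
      have e1 : ω₀ i.1 = w' i := h2 i
      have e2 : ω₀ i.1 = w ⟨i.1, lt_of_lt_of_le i.2 h⟩ := h1 ⟨i.1, lt_of_lt_of_le i.2 h⟩
      have e3 : ω i.1 = w ⟨i.1, lt_of_lt_of_le i.2 h⟩ := hω ⟨i.1, lt_of_lt_of_le i.2 h⟩
      rw [e3, ← e2, e1]
    exact inter_eq_self_of_subset_left hsub

lemma generateFrom_cylSets (m : ℕ) :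
    MeasurableSpace.generateFrom (cylSets m) = MeasurableSpace.pi := by
  apply le_antisymm
  · refine MeasurableSpace.generateFrom_le ?_
    rintro S ⟨n, w, rfl⟩
    exact measurableSet_cyl w
  · rw [MeasurableSpace.pi]
    refine iSup_le fun n => ?_
    refine measurable_iff_comap_le.1 ?_
    letI mg : MeasurableSpace (ℕ → Fin m) := MeasurableSpace.generateFrom (cylSets m)
    refine @measurable_to_countable (Fin m) _ _ _ mg _ fun ω₁ => ?_
    set y := ω₁ n with hy
    have : (fun ω : ℕ → Fin m => ω n) ⁻¹' {y}
        = ⋃ w ∈ {w : Fin (n + 1) → Fin m | w (Fin.last n) = y}, cyl m (n + 1) w := by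
      ext ω
      simp only [mem_preimage, mem_iUnion, mem_setOf_eq, cyl]
      constructor
      · intro hω
        refine ⟨fun i => ω i.1, by simpa using hω, fun i => rfl⟩
      · rintro ⟨w, hw, hcyl⟩
        have := hcyl (Fin.last n)
        simp only [Fin.val_last] at this
        rw [this]; exact hw
    rw [this]
    refine MeasurableSet.biUnion (Set.to_countable _) fun w _ => ?_
    exact MeasurableSpace.measurableSet_generateFrom ⟨n + 1, w, rfl⟩

lemma cyl_inter_shift {m k n : ℕ} (w : Fin k → Fin m) (v : Fin n → Fin m) :
    cyl m k w ∩ shiftk k ⁻¹' cyl m n v = cyl m (k + n) (Fin.append w v) := by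
  ext ω
  simp only [cyl, shiftk, mem_inter_iff, mem_preimage, mem_setOf_eq]
  constructor
  · rintro ⟨h1, h2⟩ i
    refine Fin.addCases (fun i0 => ?_) (fun j => ?_) i
    · rw [Fin.append_left]; exact h1 i0
    · rw [Fin.append_right]
      have := h2 j
      simpa [Nat.add_comm] using this
  · intro h
    constructor
    · intro i
      have := h (Fin.castAdd n i)
      rwa [Fin.append_left] at this
    · intro j
      have := h (Fin.natAdd k j)
      rw [Fin.append_right] at this
      simpa [Nat.add_comm] using this

lemma rho_cyl {m : ℕ} {p : Fin m → ℝ} {ρ : Measure (ℕ → Fin m)}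
    (hρ : IsBernoulliWith (fun i => ENNReal.ofReal (p i)) ρ) {n : ℕ} (w : Fin n → Fin m) :
    ρ (cyl m n w) = ∏ i, ENNReal.ofReal (p (w i)) := hρ.2 n w

lemma map_shift_restrict {m : ℕ} {p : Fin m → ℝ} {ρ : Measure (ℕ → Fin m)}
    (hρ : IsBernoulliWith (fun i => ENNReal.ofReal (p i)) ρ)
    (k : ℕ) (w : Fin k → Fin m) :
    (ρ.restrict (cyl m k w)).map (shiftk k) = (∏ i, ENNReal.ofReal (p (w i))) • ρ := by
  haveI := hρ.1
  have key : ∀ (n : ℕ) (v : Fin n → Fin m),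
      ρ (cyl m k w ∩ shiftk k ⁻¹' cyl m n v)
        = (∏ i, ENNReal.ofReal (p (w i))) * ρ (cyl m n v) := by
    intro n v
    rw [cyl_inter_shift, rho_cyl hρ, rho_cyl hρ, Fin.prod_univ_add]
    congr 1
    · exact Finset.prod_congr rfl fun i _ => by rw [Fin.append_left]
    · exact Finset.prod_congr rfl fun j _ => by rw [Fin.append_right]
  refine ext_of_generate_finite (cylSets m) (generateFrom_cylSets m).symm
    (isPiSystem_cylSets m) ?_ ?_
  · rintro S ⟨n, v, rfl⟩
    rw [Measure.map_apply (measurable_shiftk k) (measurableSet_cyl v),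
      Measure.restrict_apply (measurable_shiftk k (measurableSet_cyl v)),
      inter_comm, key n v, Measure.smul_apply, smul_eq_mul]
  · rw [Measure.map_apply (measurable_shiftk k) MeasurableSet.univ, preimage_univ,
      Measure.restrict_apply_univ, Measure.smul_apply, smul_eq_mul, measure_univ, mul_one]
    exact rho_cyl hρ w

/-! ### Product helper -/

lemma smul_prod_smul {α : Type*} [MeasurableSpace α] (c : ℝ≥0∞) (hc : c ≠ ⊤)
    (μ ν : Measure α) [IsFiniteMeasure μ] [IsFiniteMeasure ν] {A : Set (α × α)}
    (hA : MeasurableSet A) :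
    ((c • μ).prod (c • ν)) A = c * c * ((μ.prod ν) A) := by
  haveI : IsFiniteMeasure (c • μ) :=
    ⟨by rw [Measure.smul_apply, smul_eq_mul]
        exact ENNReal.mul_lt_top hc.lt_top (measure_lt_top μ _)⟩
  haveI : IsFiniteMeasure (c • ν) :=
    ⟨by rw [Measure.smul_apply, smul_eq_mul]
        exact ENNReal.mul_lt_top hc.lt_top (measure_lt_top ν _)⟩
  rw [Measure.prod_apply hA, Measure.prod_apply hA, lintegral_smul_measure]
  have h : ∀ x, (c • ν) (Prod.mk x ⁻¹' A) = c * ν (Prod.mk x ⁻¹' A) := fun x => rfl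
  calc c * ∫⁻ x, (c • ν) (Prod.mk x ⁻¹' A) ∂μ
      = c * ∫⁻ x, c * ν (Prod.mk x ⁻¹' A) ∂μ := by simp_rw [h]
    _ = c * (c * ∫⁻ x, ν (Prod.mk x ⁻¹' A) ∂μ) := by
        rw [lintegral_const_mul' _ _ hc]
    _ = c * c * ∫⁻ x, ν (Prod.mk x ⁻¹' A) ∂μ := by rw [mul_assoc]

/-! ### The self-similarity estimate -/

lemma measure_pref_close {m : ℕ} {d : Fin m → ℝ} (hd : StrictMono d) {p : Fin m → ℝ}
    (hp0 : ∀ i, 0 ≤ p i) {ρ : Measure (ℕ → Fin m)}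
    (hρ : IsBernoulliWith (fun i => ENNReal.ofReal (p i)) ρ)
    {l : ℝ} (hl0 : 0 < l) (hl1 : l < 1) (Dm : ℝ) (hDb : ∀ i, |d i| ≤ Dm)
    (hPim : Measurable (PiOne m d l)) (k : ℕ) (t : ℝ) :
    (ρ.prod ρ) {q : (ℕ → Fin m) × (ℕ → Fin m) |
        (∀ i < k, q.1 i = q.2 i) ∧ |PiOne m d l q.1 - PiOne m d l q.2| ≤ t}
      ≤ (ENNReal.ofReal (∑ i, p i ^ 2)) ^ k
        * (ρ.prod ρ) {q : (ℕ → Fin m) × (ℕ → Fin m) |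
            |PiOne m d l q.1 - PiOne m d l q.2| ≤ t / l ^ k} := by
  haveI : IsProbabilityMeasure ρ := hρ.1
  have habs : |l| < 1 := by rw [abs_of_pos hl0]; exact hl1
  set A' : Set ((ℕ → Fin m) × (ℕ → Fin m)) :=
    {q | |PiOne m d l q.1 - PiOne m d l q.2| ≤ t / l ^ k} with hA'_def
  have hA' : MeasurableSet A' :=
    measurableSet_le ((hPim.comp measurable_fst).sub (hPim.comp measurable_snd)).abs
      measurable_const
  have hsplit : ∀ ω : ℕ → Fin m, PiOne m d l ω
      = (∑ n ∈ Finset.range k, d (ω n) * l ^ n) + l ^ k * PiOne m d l (shiftk k ω) := by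
    intro ω
    exact tsum_split Dm (fun n => hDb (ω n)) habs k
  have hincl : {q : (ℕ → Fin m) × (ℕ → Fin m) |
        (∀ i < k, q.1 i = q.2 i) ∧ |PiOne m d l q.1 - PiOne m d l q.2| ≤ t}
      ⊆ ⋃ w : Fin k → Fin m,
          (cyl m k w ×ˢ cyl m k w) ∩ (Prod.map (shiftk k) (shiftk k)) ⁻¹' A' := by
    rintro ⟨ω₁, ω₂⟩ ⟨heq, hle⟩
    dsimp only at heq hle
    refine mem_iUnion.2 ⟨fun i => ω₁ i.1, ⟨⟨fun i => rfl, fun i => (heq i.1 i.2).symm⟩, ?_⟩⟩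
    have hdiff : PiOne m d l ω₁ - PiOne m d l ω₂
        = l ^ k * (PiOne m d l (shiftk k ω₁) - PiOne m d l (shiftk k ω₂)) := by
      rw [hsplit ω₁, hsplit ω₂]
      have hpre : (∑ n ∈ Finset.range k, d (ω₁ n) * l ^ n)
          = ∑ n ∈ Finset.range k, d (ω₂ n) * l ^ n :=
        Finset.sum_congr rfl fun n hn => by rw [heq n (Finset.mem_range.1 hn)]
      rw [hpre]; ring
    show |PiOne m d l (shiftk k ω₁) - PiOne m d l (shiftk k ω₂)| ≤ t / l ^ k
    have hlk : (0:ℝ) < l ^ k := pow_pos hl0 k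
    rw [hdiff, abs_mul, abs_of_pos hlk] at hle
    rw [le_div_iff₀ hlk]
    linarith [hle]
  refine le_trans (measure_mono hincl) ?_
  refine le_trans (measure_iUnion_le _) ?_
  have hterm : ∀ w : Fin k → Fin m,
      (ρ.prod ρ) ((cyl m k w ×ˢ cyl m k w) ∩ (Prod.map (shiftk k) (shiftk k)) ⁻¹' A')
        = (∏ i, ENNReal.ofReal (p (w i))) * (∏ i, ENNReal.ofReal (p (w i)))
          * (ρ.prod ρ) A' := by
    intro w
    have hcylm := measurableSet_cyl w
    have hc_ne : (∏ i, ENNReal.ofReal (p (w i))) ≠ ⊤ :=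
      (ENNReal.prod_lt_top fun i _ => ENNReal.ofReal_lt_top).ne
    have hShm : Measurable (Prod.map (shiftk (α := Fin m) k) (shiftk (α := Fin m) k)) :=
      (measurable_shiftk k).prodMap (measurable_shiftk k)
    rw [inter_comm, ← Measure.restrict_apply' (hcylm.prod hcylm), ← Measure.prod_restrict,
      ← Measure.map_apply hShm hA', ← Measure.map_prod_map _ _ (measurable_shiftk k)
        (measurable_shiftk k), map_shift_restrict hρ k w,
      smul_prod_smul _ hc_ne _ _ hA']
  rw [tsum_fintype]
  refine le_of_eq ?_
  calc ∑ w : Fin k → Fin m,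
        (ρ.prod ρ) ((cyl m k w ×ˢ cyl m k w) ∩ (Prod.map (shiftk k) (shiftk k)) ⁻¹' A')
      = ∑ w : Fin k → Fin m, (∏ i, ENNReal.ofReal (p (w i)) * ENNReal.ofReal (p (w i)))
          * (ρ.prod ρ) A' := by
        refine Finset.sum_congr rfl fun w _ => ?_
        rw [hterm w, Finset.prod_mul_distrib]
    _ = (∑ w : Fin k → Fin m, ∏ i, ENNReal.ofReal (p (w i)) * ENNReal.ofReal (p (w i)))
          * (ρ.prod ρ) A' := by rw [Finset.sum_mul]
    _ = (ENNReal.ofReal (∑ i, p i ^ 2)) ^ k * (ρ.prod ρ) A' := by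
        congr 1
        have h : ∀ j : Fin m, ENNReal.ofReal (p j) * ENNReal.ofReal (p j)
            = ENNReal.ofReal (p j ^ 2) := fun j => by
          rw [← ENNReal.ofReal_mul (hp0 j), sq]
        have h1 : (∑ j, ENNReal.ofReal (p j ^ 2)) = ENNReal.ofReal (∑ i, p i ^ 2) :=
          (ENNReal.ofReal_sum_of_nonneg fun i _ => sq_nonneg _).symm
        rw [← h1, Finset.sum_pow']
        rw [Fintype.piFinset_univ]
        refine Finset.sum_congr rfl fun w _ => Finset.prod_congr rfl fun i _ => (h (w i))

/-! ### The L² correlation estimate -/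

lemma amgm_ofReal (a b : ℝ) :
    ENNReal.ofReal a * ENNReal.ofReal b ≤ ENNReal.ofReal (a ^ 2) + ENNReal.ofReal (b ^ 2) := by
  by_cases ha : 0 ≤ a
  · by_cases hb : 0 ≤ b
    · rw [← ENNReal.ofReal_mul ha, ← ENNReal.ofReal_add (sq_nonneg a) (sq_nonneg b)]
      apply ENNReal.ofReal_le_ofReal
      nlinarith [sq_nonneg (a - b)]
    · rw [ENNReal.ofReal_of_nonpos (le_of_not_ge hb), mul_zero]
      exact zero_le
  · rw [ENNReal.ofReal_of_nonpos (le_of_not_ge ha), zero_mul]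
    exact zero_le

lemma conv_bound {f : ℝ → ℝ} (hf : Measurable f) (hfi : Integrable (fun x => f x ^ 2))
    {t : ℝ} (ht : 0 ≤ t) :
    ((volume.withDensity fun x => ENNReal.ofReal (f x)).prod
        (volume.withDensity fun x => ENNReal.ofReal (f x)))
      {q : ℝ × ℝ | |q.1 - q.2| ≤ t}
      ≤ ENNReal.ofReal (4 * t) * ENNReal.ofReal (∫ x, f x ^ 2) := by
  set q : ℝ → ℝ≥0∞ := fun x => ENNReal.ofReal (f x) with hq
  set Q : ℝ → ℝ≥0∞ := fun x => ENNReal.ofReal (f x ^ 2) with hQdef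
  have hqm : Measurable q := hf.ennreal_ofReal
  have hQm : Measurable Q := (hf.pow_const 2).ennreal_ofReal
  set E : Set (ℝ × ℝ) := {q : ℝ × ℝ | |q.1 - q.2| ≤ t} with hE
  have hEm : MeasurableSet E :=
    measurableSet_le (measurable_fst.sub measurable_snd).abs measurable_const
  set W : ℝ × ℝ → ℝ≥0∞ := E.indicator (fun _ => (1 : ℝ≥0∞)) with hW
  have hWm : Measurable W := measurable_const.indicator hEm
  have hsect : ∀ x : ℝ, Prod.mk x ⁻¹' E = Icc (x - t) (x + t) := by
    intro x; ext y
    simp only [mem_preimage, hE, mem_setOf_eq, mem_Icc, abs_le]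
    constructor
    · rintro ⟨h1, h2⟩; constructor <;> linarith
    · rintro ⟨h1, h2⟩; constructor <;> linarith
  have hsect2 : ∀ y : ℝ, (fun x => W (x, y)) = (Icc (y - t) (y + t)).indicator fun _ => 1 := by
    intro y; ext x
    have hiff : (x, y) ∈ E ↔ x ∈ Icc (y - t) (y + t) := by
      simp only [hE, mem_setOf_eq, mem_Icc, abs_le]
      constructor
      · rintro ⟨h1, h2⟩; constructor <;> linarith
      · rintro ⟨h1, h2⟩; constructor <;> linarith
    by_cases h : (x, y) ∈ E
    · rw [hW, indicator_of_mem h, indicator_of_mem (hiff.1 h)]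
    · rw [hW, indicator_of_notMem h, indicator_of_notMem (fun hc => h (hiff.2 hc))]
  have hWsec1 : ∀ x : ℝ, (fun y => W (x, y)) = (Icc (x - t) (x + t)).indicator fun _ => 1 := by
    intro x; ext y
    by_cases h : (x, y) ∈ E
    · have : y ∈ Icc (x - t) (x + t) := by rw [← hsect x]; exact h
      rw [hW, indicator_of_mem h, indicator_of_mem this]
    · have : y ∉ Icc (x - t) (x + t) := by rw [← hsect x]; exact h
      rw [hW, indicator_of_notMem h, indicator_of_notMem this]
  have hWint1 : ∀ x : ℝ, ∫⁻ y, W (x, y) ∂volume = ENNReal.ofReal (2 * t) := by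
    intro x
    rw [hWsec1 x, lintegral_indicator_const measurableSet_Icc, one_mul, Real.volume_Icc]
    congr 1; ring
  have hWint2 : ∀ y : ℝ, ∫⁻ x, W (x, y) ∂volume = ENNReal.ofReal (2 * t) := by
    intro y
    rw [hsect2 y, lintegral_indicator_const measurableSet_Icc, one_mul, Real.volume_Icc]
    congr 1; ring
  set ν := volume.withDensity q with hν
  have hWq : ∀ x : ℝ, Measurable fun y => W (x, y) * q y :=
    fun x => (hWm.comp measurable_prodMk_left).mul hqm
  have hH : Measurable fun x => ∫⁻ y, W (x, y) * q y ∂volume :=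
    Measurable.lintegral_prod_right' (hWm.mul (hqm.comp measurable_snd))
  have step1 : (ν.prod ν) E = ∫⁻ x, q x * ∫⁻ y, W (x, y) * q y ∂volume ∂volume := by
    rw [Measure.prod_apply hEm]
    have inner : ∀ x, ν (Prod.mk x ⁻¹' E) = ∫⁻ y, W (x, y) * q y ∂volume := by
      intro x
      rw [hsect x, withDensity_apply _ measurableSet_Icc,
        ← lintegral_indicator measurableSet_Icc]
      congr 1
      ext y
      by_cases h : y ∈ Icc (x - t) (x + t)
      · have hxy : (x, y) ∈ E := by
          show y ∈ Prod.mk x ⁻¹' E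
          rw [hsect x]; exact h
        rw [indicator_of_mem h, hW, indicator_of_mem hxy, one_mul]
      · have hxy : (x, y) ∉ E := by
          show y ∉ Prod.mk x ⁻¹' E
          rw [hsect x]; exact h
        rw [indicator_of_notMem h, hW, indicator_of_notMem hxy, zero_mul]
    calc ∫⁻ x, ν (Prod.mk x ⁻¹' E) ∂ν
        = ∫⁻ x, (∫⁻ y, W (x, y) * q y ∂volume) ∂ν := by
          congr 1; ext x; exact inner x
      _ = ∫⁻ x, q x * ∫⁻ y, W (x, y) * q y ∂volume ∂volume := by
          rw [hν, lintegral_withDensity_eq_lintegral_mul _ hqm hH]; rfl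
  have hpt : ∀ x : ℝ, q x * ∫⁻ y, W (x, y) * q y ∂volume
      ≤ Q x * (∫⁻ y, W (x, y) ∂volume) + ∫⁻ y, W (x, y) * Q y ∂volume := by
    intro x
    rw [← lintegral_const_mul _ (hWq x)]
    have hb : ∀ y : ℝ, q x * (W (x, y) * q y) ≤ W (x, y) * Q x + W (x, y) * Q y := by
      intro y
      by_cases h : (x, y) ∈ E
      · rw [hW]
        simp only [indicator_of_mem h, one_mul]
        exact amgm_ofReal _ _
      · rw [hW]
        simp [indicator_of_notMem h]
    calc ∫⁻ y, q x * (W (x, y) * q y) ∂volume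
        ≤ ∫⁻ y, (W (x, y) * Q x + W (x, y) * Q y) ∂volume := lintegral_mono hb
      _ = (∫⁻ y, W (x, y) * Q x ∂volume) + ∫⁻ y, W (x, y) * Q y ∂volume :=
          lintegral_add_left ((hWm.comp measurable_prodMk_left).mul measurable_const) _
      _ = Q x * (∫⁻ y, W (x, y) ∂volume) + ∫⁻ y, W (x, y) * Q y ∂volume := by
          rw [lintegral_mul_const _
            (show Measurable fun y => W (x, y) from hWm.comp measurable_prodMk_left), mul_comm]
  have step2 : (ν.prod ν) E
      ≤ (∫⁻ x, Q x * (∫⁻ y, W (x, y) ∂volume) ∂volume)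
        + ∫⁻ x, (∫⁻ y, W (x, y) * Q y ∂volume) ∂volume := by
    rw [step1]
    calc ∫⁻ x, q x * ∫⁻ y, W (x, y) * q y ∂volume ∂volume
        ≤ ∫⁻ x, (Q x * (∫⁻ y, W (x, y) ∂volume) + ∫⁻ y, W (x, y) * Q y ∂volume) ∂volume :=
          lintegral_mono hpt
      _ = _ := lintegral_add_left (hQm.mul (Measurable.lintegral_prod_right' hWm)) _
  have hA : (∫⁻ x, Q x * (∫⁻ y, W (x, y) ∂volume) ∂volume)
      = ENNReal.ofReal (2 * t) * ∫⁻ x, Q x ∂volume := by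
    rw [← lintegral_const_mul _ hQm]
    congr 1; ext x
    rw [hWint1 x, mul_comm]
  have hB : (∫⁻ x, (∫⁻ y, W (x, y) * Q y ∂volume) ∂volume)
      = ENNReal.ofReal (2 * t) * ∫⁻ x, Q x ∂volume := by
    rw [lintegral_lintegral_swap ((hWm.mul (hQm.comp measurable_snd)).aemeasurable)]
    rw [← lintegral_const_mul _ hQm]
    congr 1; ext y
    rw [lintegral_mul_const _
      (show Measurable fun x => W (x, y) from hWm.comp measurable_prodMk_right),
      hWint2 y, mul_comm]
  have hQint : ∫⁻ x, Q x ∂volume = ENNReal.ofReal (∫ x, f x ^ 2) :=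
    (ofReal_integral_eq_lintegral_ofReal hfi (ae_of_all _ fun x => sq_nonneg _)).symm
  calc (ν.prod ν) E ≤ _ := step2
    _ = ENNReal.ofReal (2 * t) * ENNReal.ofReal (∫ x, f x ^ 2)
        + ENNReal.ofReal (2 * t) * ENNReal.ofReal (∫ x, f x ^ 2) := by
        rw [hA, hB, hQint]
    _ = ENNReal.ofReal (4 * t) * ENNReal.ofReal (∫ x, f x ^ 2) := by
        rw [← add_mul, ← ENNReal.ofReal_add (by linarith) (by linarith)]
        congr 2; ring

end TransvAux

set_option maxHeartbeats 1000000 in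
/-- For a Bernoulli measure `ρ = p^ℕ` with `s = ∑ pᵢ²`, closed intervals
`J₁ × J₂ ⊂ Γ(s,1)` and `J₁` an interval of transversality for `𝓑̃′ = ⋃ₖ x^k 𝓑′`, there is a
constant `C` such that whenever `ν_λ` (for `λ ∈ J₂`) has an `L²` density `f`,
`limsup_{r→0⁺} r^{−2} ∫_{𝓑̃′} Leb{γ ∈ J₁ : |Π_{γ,λ}(ω)| ≤ r} dη(ω) ≤ C‖f‖₂²`. -/
theorem transversality_L2_density_estimate
    (m : ℕ) (hm : 2 ≤ m) (d : Fin m → ℝ) (hd0 : d ⟨0, by omega⟩ = 0) (hd : StrictMono d)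
    (p : Fin m → ℝ) (hp0 : ∀ i, 0 ≤ p i) (hp1 : ∑ i, p i = 1)
    (ρ : Measure (ℕ → Fin m)) (hρ : IsBernoulliWith (fun i => ENNReal.ofReal (p i)) ρ)
    (a1 b1 a2 b2 : ℝ) (h1 : a1 ≤ b1) (h2 : a2 ≤ b2)
    (hΓ : Icc a1 b1 ×ˢ Icc a2 b2 ⊆ Gamma m (∑ i, p i ^ 2) 1)
    (B' : Set (ℕ → ℝ)) (hB' : ∀ c ∈ B', memB m d c)
    (htr : IsTransvOn (Icc a1 b1) B') :
    ∃ C : ℝ, 0 < C ∧ ∀ l ∈ Icc a2 b2, ∀ f : ℝ → ℝ,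
      ρ.map (PiOne m d l) = volume.withDensity (fun x => ENNReal.ofReal (f x)) →
      MemLp f 2 volume →
      Filter.limsup
        (fun r : ℝ =>
          (∫⁻ ω in ⋃ k, shiftSeq k '' B',
              volume {g ∈ Icc a1 b1 | Real.sqrt (Beval ω g ^ 2 + Beval ω l ^ 2) ≤ r}
            ∂(etaMeasure m d ρ)) / ENNReal.ofReal (r ^ 2))
        (𝓝[>] (0 : ℝ))
      ≤ ENNReal.ofReal (C * ∫ x, f x ^ 2) := by
  classical
  obtain ⟨M, hM, htrM⟩ := htr
  haveI : IsProbabilityMeasure ρ := hρ.1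
  have hs0 : (0:ℝ) ≤ ∑ i, p i ^ 2 := Finset.sum_nonneg fun i _ => sq_nonneg _
  have hmem1 : ((a1, a2) : ℝ × ℝ) ∈ Gamma m (∑ i, p i ^ 2) 1 :=
    hΓ ⟨⟨le_rfl, h1⟩, ⟨le_rfl, h2⟩⟩
  have ha1 : 0 < a1 := hmem1.1
  have ha12 : a1 < a2 := hmem1.2.1
  have hsa : (∑ i, p i ^ 2) < a1 * a2 := hmem1.2.2.2.2.1
  have ha2pos : 0 < a2 := lt_trans ha1 ha12
  set u : ℝ := (∑ i, p i ^ 2) / (a1 * a2) with hu_def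
  have hu0 : 0 ≤ u := div_nonneg hs0 (by positivity)
  have hu1 : u < 1 := (div_lt_one (by positivity)).2 hsa
  have h1u : (0:ℝ) < 1 - u := by linarith
  refine ⟨8 * M / (1 - u), div_pos (by positivity) h1u, ?_⟩
  intro l hlmem2 f hmap hf2
  -- facts about l
  have hlmem : ((a1, l) : ℝ × ℝ) ∈ Gamma m (∑ i, p i ^ 2) 1 := hΓ ⟨⟨le_rfl, h1⟩, hlmem2⟩
  have hal : a1 < l := hlmem.2.1
  have hl1 : l < 1 := hlmem.2.2.1
  have hlpos : 0 < l := lt_trans ha1 hal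
  have habsl : |l| < 1 := by rw [abs_of_pos hlpos]; exact hl1
  have hsl : (∑ i, p i ^ 2) < a1 * l := hlmem.2.2.2.2.1
  have ha2l : a2 ≤ l := hlmem2.1
  have hb1l : b1 < 1 := by
    have hmemb : ((b1, a2) : ℝ × ℝ) ∈ Gamma m (∑ i, p i ^ 2) 1 :=
      hΓ ⟨⟨h1, le_rfl⟩, ⟨le_rfl, h2⟩⟩
    linarith [hmemb.2.1, hmemb.2.2.1]
  -- digit bounds
  have h0m : 0 < m := by omega
  set Dm : ℝ := d ⟨m - 1, by omega⟩ with hDm_def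
  have hd_nonneg : ∀ i, 0 ≤ d i := by
    intro i
    have h00 : d ⟨0, h0m⟩ = 0 := hd0
    have hmono := hd.monotone (show (⟨0, h0m⟩ : Fin m) ≤ i by
      rw [Fin.le_def]; exact Nat.zero_le _)
    linarith
  have hd_le : ∀ i, d i ≤ Dm := by
    intro i
    have hile : i.1 ≤ m - 1 := by have := i.isLt; omega
    exact hd.monotone (by rw [Fin.le_def]; simpa using hile)
  have hDm0 : 0 ≤ Dm := hd_nonneg _
  have hdabs : ∀ i, |d i| ≤ Dm := fun i => abs_le.2 ⟨by linarith [hd_nonneg i], hd_le i⟩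
  have hdd : ∀ i j : Fin m, |d i - d j| ≤ Dm := fun i j =>
    abs_le.2 ⟨by linarith [hd_le j, hd_nonneg i], by linarith [hd_le i, hd_nonneg j]⟩
  -- measurable PiOne
  have hPim : Measurable (PiOne m d l) :=
    TransvAux.meas_tsum (fun n => (measurable_of_countable d).comp (measurable_pi_apply n))
      Dm (fun n ω => hdabs (ω n)) habsl
  -- measurable proxy for Beval · l
  set proj : (ℕ → ℝ) → ℕ → ℝ := fun ω n => max (-Dm) (min (ω n) Dm) with hproj_def
  have hproj_b : ∀ (n : ℕ) (ω : ℕ → ℝ), |proj ω n| ≤ Dm := by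
    intro n ω
    rw [abs_le]
    refine ⟨le_max_left _ _, max_le (by linarith) (min_le_right _ _)⟩
  set g : (ℕ → ℝ) → ℝ := fun ω => ∑' n, proj ω n * l ^ n with hg_def
  have hgmeas : Measurable g :=
    TransvAux.meas_tsum
      (fun n => measurable_const.max ((measurable_pi_apply n).min measurable_const))
      Dm hproj_b habsl
  set K : Set (ℕ → ℝ) := {ω | ∀ n, ω n ∈ Icc (-Dm) Dm} with hK_def
  have hKmeas : MeasurableSet K := by
    have hKeq : K = ⋂ n, (fun ω : ℕ → ℝ => ω n) ⁻¹' Icc (-Dm) Dm := by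
      ext ω; simp [hK_def]
    rw [hKeq]
    exact MeasurableSet.iInter fun n => (measurable_pi_apply n) measurableSet_Icc
  have hgK : ∀ ω ∈ K, g ω = Beval ω l := by
    intro ω hω
    have hpn : ∀ n, proj ω n = ω n := by
      intro n
      have h := hω n
      rw [mem_Icc] at h
      simp only [hproj_def]
      rw [min_eq_left h.2, max_eq_right h.1]
    show (∑' n, proj ω n * l ^ n) = ∑' n, ω n * l ^ n
    exact tsum_congr fun n => by rw [hpn n]
  set Z : ℕ → Set (ℕ → ℝ) := fun k => {ω | ∀ i, i < k → ω i = 0} with hZ_def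
  have hZmeas : ∀ k, MeasurableSet (Z k) := by
    intro k
    have hZeq : Z k = ⋂ i, ⋂ (_ : i < k), (fun ω : ℕ → ℝ => ω i) ⁻¹' {0} := by
      ext ω; simp [hZ_def]
    rw [hZeq]
    exact MeasurableSet.iInter fun i => MeasurableSet.iInter fun _ =>
      (measurable_pi_apply i) (measurableSet_singleton 0)
  -- measurable difference map
  have hFmeas : Measurable fun q : (ℕ → Fin m) × (ℕ → Fin m) =>
      (fun n => d (q.1 n) - d (q.2 n)) :=
    measurable_pi_lambda _ fun n =>
      (((measurable_of_countable d).comp ((measurable_pi_apply n).comp measurable_fst)).sub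
        ((measurable_of_countable d).comp ((measurable_pi_apply n).comp measurable_snd)))
  -- measurable version of f
  have hfae := hf2.aestronglyMeasurable
  set f₀ : ℝ → ℝ := hfae.mk f with hf0_def
  have hf0meas : Measurable f₀ := hfae.stronglyMeasurable_mk.measurable
  have hff0 : f =ᵐ[volume] f₀ := hfae.ae_eq_mk
  have hf0int : Integrable (fun x => f₀ x ^ 2) volume :=
    (hf2.integrable_sq).congr (hff0.mono fun x hx => by dsimp only; rw [hx])
  have hIeq : ∫ x, f x ^ 2 = ∫ x, f₀ x ^ 2 :=
    integral_congr_ae (hff0.mono fun x hx => by dsimp only; rw [hx])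
  have hI0 : 0 ≤ ∫ x, f x ^ 2 := integral_nonneg fun x => sq_nonneg _
  have hmap' : ρ.map (PiOne m d l) = volume.withDensity fun x => ENNReal.ofReal (f₀ x) := by
    rw [hmap]
    exact withDensity_congr_ae (hff0.mono fun x hx => by dsimp only; rw [hx])
  -- the pair correlation bound
  have hpair : ∀ t : ℝ, 0 ≤ t →
      (ρ.prod ρ) {q : (ℕ → Fin m) × (ℕ → Fin m) |
          |PiOne m d l q.1 - PiOne m d l q.2| ≤ t}
        ≤ ENNReal.ofReal (4 * t) * ENNReal.ofReal (∫ x, f x ^ 2) := by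
    intro t ht
    have hEt : MeasurableSet {z : ℝ × ℝ | |z.1 - z.2| ≤ t} :=
      measurableSet_le (measurable_fst.sub measurable_snd).abs measurable_const
    have hset : {q : (ℕ → Fin m) × (ℕ → Fin m) | |PiOne m d l q.1 - PiOne m d l q.2| ≤ t}
        = Prod.map (PiOne m d l) (PiOne m d l) ⁻¹' {z : ℝ × ℝ | |z.1 - z.2| ≤ t} := rfl
    rw [hset, ← Measure.map_apply (hPim.prodMap hPim) hEt,
      ← Measure.map_prod_map _ _ hPim hPim, hmap', hIeq]
    exact TransvAux.conv_bound hf0meas hf0int ht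
  -- the main per-radius bound
  have key : ∀ r : ℝ, 0 < r →
      (∫⁻ ω in ⋃ k, shiftSeq k '' B',
          volume {g' ∈ Icc a1 b1 | Real.sqrt (Beval ω g' ^ 2 + Beval ω l ^ 2) ≤ r}
        ∂(etaMeasure m d ρ))
      ≤ ENNReal.ofReal (r ^ 2) * ENNReal.ofReal (8 * M / (1 - u) * ∫ x, f x ^ 2) := by
    intro r hr
    set η := etaMeasure m d ρ with hη_def
    set V : (ℕ → ℝ) → ℝ≥0∞ := fun ω =>
      volume {g' ∈ Icc a1 b1 | Real.sqrt (Beval ω g' ^ 2 + Beval ω l ^ 2) ≤ r} with hV_def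
    set W : ℕ → Set (ℕ → ℝ) := fun k => (Z k ∩ K) ∩ {ω | |g ω| ≤ r} with hW_def
    have hWmeas : ∀ k, MeasurableSet (W k) :=
      fun k => ((hZmeas k).inter hKmeas).inter (measurableSet_le hgmeas.abs measurable_const)
    refine le_trans (lintegral_iUnion_le _ _) ?_
    have hstepk : ∀ k : ℕ,
        (∫⁻ ω in shiftSeq k '' B', V ω ∂η)
          ≤ ENNReal.ofReal (M * (2 * r / a1 ^ k)) * η (W k) := by
      intro k
      have ha1k : (0:ℝ) < a1 ^ k := pow_pos ha1 k
      have hrk : (0:ℝ) < 2 * r / a1 ^ k := by positivity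
      set c : ℝ≥0∞ := ENNReal.ofReal (M * (2 * r / a1 ^ k)) with hc_def
      have hbd : ∀ ω ∈ shiftSeq k '' B', V ω ≤ (W k).indicator (fun _ => c) ω := by
        rintro ω ⟨co, hco, rfl⟩
        have hcoD : ∀ n, |co n| ≤ Dm := by
          intro n
          obtain ⟨i, j, hij⟩ := (hB' co hco).1 n
          rw [hij]; exact hdd i j
        have hcoabs : ∀ n, |shiftSeq k co n| ≤ Dm := by
          intro n
          by_cases h : n < k
          · simp only [shiftSeq, if_pos h, abs_zero]; exact hDm0
          · simp only [shiftSeq, if_neg h]; exact hcoD _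
        have hωK : shiftSeq k co ∈ K :=
          fun n => mem_Icc.2 ⟨neg_le_of_abs_le (hcoabs n), le_of_abs_le (hcoabs n)⟩
        have hωZ : shiftSeq k co ∈ Z k := fun i hi => by simp [shiftSeq, hi]
        by_cases hcase : |g (shiftSeq k co)| ≤ r
        · have hmem : shiftSeq k co ∈ W k := ⟨⟨hωZ, hωK⟩, hcase⟩
          rw [indicator_of_mem hmem]
          have hsub : {g' ∈ Icc a1 b1 |
                Real.sqrt (Beval (shiftSeq k co) g' ^ 2 + Beval (shiftSeq k co) l ^ 2) ≤ r}
              ⊆ {α ∈ Icc a1 b1 | |Beval co α| < 2 * r / a1 ^ k} := by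
            rintro x ⟨hx, hxr⟩
            refine ⟨hx, ?_⟩
            have hx0 : 0 < x := lt_of_lt_of_le ha1 hx.1
            have hx1 : |x| < 1 := by
              rw [abs_of_pos hx0]; exact lt_of_le_of_lt hx.2 hb1l
            have hle1 : |Beval (shiftSeq k co) x| ≤ r := by
              refine le_trans ?_ hxr
              rw [← Real.sqrt_sq_eq_abs]
              exact Real.sqrt_le_sqrt (by nlinarith [sq_nonneg (Beval (shiftSeq k co) l)])
            rw [TransvAux.beval_shiftSeq Dm hcoD hDm0 hx1 k, abs_mul, abs_pow,
              abs_of_pos hx0] at hle1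
            have hxk : a1 ^ k ≤ x ^ k := pow_le_pow_left₀ (le_of_lt ha1) hx.1 k
            have hbk : |Beval co x| * a1 ^ k ≤ r := by
              calc |Beval co x| * a1 ^ k ≤ |Beval co x| * x ^ k :=
                    mul_le_mul_of_nonneg_left hxk (abs_nonneg _)
                _ = x ^ k * |Beval co x| := mul_comm _ _
                _ ≤ r := hle1
            have hfin : |Beval co x| ≤ r / a1 ^ k := (le_div_iff₀ ha1k).2 hbk
            have h2r : r / a1 ^ k < 2 * r / a1 ^ k := by
              rw [div_lt_div_iff₀ ha1k ha1k]
              nlinarith [mul_pos hr ha1k]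
            linarith
          calc V (shiftSeq k co)
              ≤ volume {α ∈ Icc a1 b1 | |Beval co α| < 2 * r / a1 ^ k} := measure_mono hsub
            _ ≤ c := le_of_lt (htrM co hco _ hrk)
        · rw [indicator_of_notMem (fun hmem => hcase hmem.2)]
          have hempty : {g' ∈ Icc a1 b1 |
              Real.sqrt (Beval (shiftSeq k co) g' ^ 2 + Beval (shiftSeq k co) l ^ 2) ≤ r}
              = ∅ := by
            rw [eq_empty_iff_forall_notMem]
            rintro x ⟨hx, hxr⟩
            apply hcase
            rw [hgK _ hωK]
            refine le_trans ?_ hxr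
            rw [← Real.sqrt_sq_eq_abs]
            exact Real.sqrt_le_sqrt (by nlinarith [sq_nonneg (Beval (shiftSeq k co) x)])
          refine le_of_eq ?_
          show volume {g' ∈ Icc a1 b1 |
              Real.sqrt (Beval (shiftSeq k co) g' ^ 2 + Beval (shiftSeq k co) l ^ 2) ≤ r} = 0
          rw [hempty, measure_empty]
      calc (∫⁻ ω in shiftSeq k '' B', V ω ∂η)
          ≤ ∫⁻ ω in shiftSeq k '' B', (W k).indicator (fun _ => c) ω ∂η :=
            setLIntegral_mono (measurable_const.indicator (hWmeas k)) hbd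
        _ ≤ ∫⁻ ω, (W k).indicator (fun _ => c) ω ∂η := setLIntegral_le_lintegral _ _
        _ = c * η (W k) := lintegral_indicator_const (hWmeas k) c
    have hWbound : ∀ k : ℕ, η (W k)
        ≤ ENNReal.ofReal (∑ i, p i ^ 2) ^ k
          * (ENNReal.ofReal (4 * (r / l ^ k)) * ENNReal.ofReal (∫ x, f x ^ 2)) := by
      intro k
      have hlk : (0:ℝ) < l ^ k := pow_pos hlpos k
      have hrlk : (0:ℝ) ≤ r / l ^ k := le_of_lt (by positivity)
      have hη : η (W k) = (ρ.prod ρ)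
          ((fun q : (ℕ → Fin m) × (ℕ → Fin m) => (fun n => d (q.1 n) - d (q.2 n))) ⁻¹' W k) := by
        rw [hη_def, etaMeasure, Measure.map_apply hFmeas (hWmeas k)]
      rw [hη]
      have hsub2 : ((fun q : (ℕ → Fin m) × (ℕ → Fin m) =>
            (fun n => d (q.1 n) - d (q.2 n))) ⁻¹' W k)
          ⊆ {q : (ℕ → Fin m) × (ℕ → Fin m) |
              (∀ i < k, q.1 i = q.2 i) ∧ |PiOne m d l q.1 - PiOne m d l q.2| ≤ r} := by
        rintro ⟨ω₁, ω₂⟩ hq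
        obtain ⟨⟨hqZ, hqK⟩, hqg⟩ := hq
        constructor
        · intro i hi
          refine hd.injective ?_
          have := hqZ i hi
          dsimp only at this
          linarith [this]
        · have hBe : Beval (fun n => d (ω₁ n) - d (ω₂ n)) l
              = PiOne m d l ω₁ - PiOne m d l ω₂ :=
            TransvAux.beval_sub Dm (fun n => hdabs _) (fun n => hdabs _) habsl
          have hval := hqg
          dsimp only [mem_setOf_eq] at hval
          change |g (fun n => d (ω₁ n) - d (ω₂ n))| ≤ r at hval
          rw [hgK (fun n => d (ω₁ n) - d (ω₂ n)) hqK] at hval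
          rw [hBe] at hval
          exact hval
      refine le_trans (measure_mono hsub2) ?_
      refine le_trans
        (TransvAux.measure_pref_close hd hp0 hρ hlpos hl1 Dm hdabs hPim k r) ?_
      exact mul_le_mul_right (hpair (r / l ^ k) hrlk) _
    -- per-k numeric bound
    have hiter : ∀ k : ℕ,
        ENNReal.ofReal (M * (2 * r / a1 ^ k)) *
          (ENNReal.ofReal (∑ i, p i ^ 2) ^ k
            * (ENNReal.ofReal (4 * (r / l ^ k)) * ENNReal.ofReal (∫ x, f x ^ 2)))
        ≤ ENNReal.ofReal (8 * M * r ^ 2 * (∫ x, f x ^ 2)) * ENNReal.ofReal u ^ k := by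
      intro k
      have ha1k : (0:ℝ) < a1 ^ k := pow_pos ha1 k
      have hlk : (0:ℝ) < l ^ k := pow_pos hlpos k
      have e1 : ENNReal.ofReal (∑ i, p i ^ 2) ^ k
          = ENNReal.ofReal ((∑ i, p i ^ 2) ^ k) := (ENNReal.ofReal_pow hs0 k).symm
      rw [e1, ← ENNReal.ofReal_mul (by positivity),
        ← ENNReal.ofReal_mul (by positivity), ← ENNReal.ofReal_mul (by positivity)]
      have hreal : M * (2 * r / a1 ^ k) * ((∑ i, p i ^ 2) ^ k * (4 * (r / l ^ k)
          * (∫ x, f x ^ 2)))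
          ≤ 8 * M * r ^ 2 * (∫ x, f x ^ 2) * u ^ k := by
        have heq2 : M * (2 * r / a1 ^ k) * ((∑ i, p i ^ 2) ^ k * (4 * (r / l ^ k)
            * (∫ x, f x ^ 2)))
            = 8 * M * r ^ 2 * (∫ x, f x ^ 2) * ((∑ i, p i ^ 2) / (a1 * l)) ^ k := by
          rw [div_pow, mul_pow]
          field_simp
          ring
        rw [heq2]
        have hsal : (∑ i, p i ^ 2) / (a1 * l) ≤ u := by
          rw [hu_def]
          apply div_le_div_of_nonneg_left hs0 (by positivity)
          nlinarith
        have hsal0 : 0 ≤ (∑ i, p i ^ 2) / (a1 * l) := by positivity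
        have hpk : ((∑ i, p i ^ 2) / (a1 * l)) ^ k ≤ u ^ k :=
          pow_le_pow_left₀ hsal0 hsal k
        have hc0 : 0 ≤ 8 * M * r ^ 2 * (∫ x, f x ^ 2) :=
          mul_nonneg (by positivity) hI0
        exact mul_le_mul_of_nonneg_left hpk hc0
      calc ENNReal.ofReal (M * (2 * r / a1 ^ k) * ((∑ i, p i ^ 2) ^ k * (4 * (r / l ^ k)
              * (∫ x, f x ^ 2))))
          ≤ ENNReal.ofReal (8 * M * r ^ 2 * (∫ x, f x ^ 2) * u ^ k) :=
            ENNReal.ofReal_le_ofReal hreal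
        _ = ENNReal.ofReal (8 * M * r ^ 2 * (∫ x, f x ^ 2)) * ENNReal.ofReal u ^ k := by
            rw [ENNReal.ofReal_mul (mul_nonneg (by positivity) hI0), ENNReal.ofReal_pow hu0]
    -- sum up
    calc (∑' k, ∫⁻ ω in shiftSeq k '' B', V ω ∂η)
        ≤ ∑' k, ENNReal.ofReal (8 * M * r ^ 2 * (∫ x, f x ^ 2)) * ENNReal.ofReal u ^ k :=
          ENNReal.tsum_le_tsum fun k =>
            le_trans (le_trans (hstepk k) (mul_le_mul_right (hWbound k) _)) (hiter k)
      _ = ENNReal.ofReal (8 * M * r ^ 2 * (∫ x, f x ^ 2)) * (1 - ENNReal.ofReal u)⁻¹ := by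
          rw [ENNReal.tsum_mul_left, ENNReal.tsum_geometric]
      _ = ENNReal.ofReal (8 * M * r ^ 2 * (∫ x, f x ^ 2)) * ENNReal.ofReal ((1 - u)⁻¹) := by
          congr 1
          rw [ENNReal.ofReal_inv_of_pos h1u, ENNReal.ofReal_sub _ hu0, ENNReal.ofReal_one]
      _ = ENNReal.ofReal (r ^ 2) * ENNReal.ofReal (8 * M / (1 - u) * ∫ x, f x ^ 2) := by
          rw [← ENNReal.ofReal_mul (mul_nonneg (by positivity) hI0),
            ← ENNReal.ofReal_mul (sq_nonneg r)]
          congr 1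
          field_simp
  -- conclude with the limsup
  refine Filter.limsup_le_of_le (by isBoundedDefault) ?_
  filter_upwards [self_mem_nhdsWithin] with r hr
  have hr0 : 0 < r := hr
  have hkey := key r hr0
  have hne : ENNReal.ofReal (r ^ 2) ≠ 0 := by
    rw [Ne, ENNReal.ofReal_eq_zero, not_le]
    positivity
  calc (∫⁻ ω in ⋃ k, shiftSeq k '' B',
          volume {g' ∈ Icc a1 b1 | Real.sqrt (Beval ω g' ^ 2 + Beval ω l ^ 2) ≤ r}
        ∂(etaMeasure m d ρ)) / ENNReal.ofReal (r ^ 2)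
      ≤ (ENNReal.ofReal (r ^ 2)
          * ENNReal.ofReal (8 * M / (1 - u) * ∫ x, f x ^ 2)) / ENNReal.ofReal (r ^ 2) :=
        ENNReal.div_le_div_right hkey _
    _ = ENNReal.ofReal (8 * M / (1 - u) * ∫ x, f x ^ 2) := by
        rw [mul_comm, mul_div_assoc, ENNReal.div_self hne ENNReal.ofReal_ne_top, mul_one]
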